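/- Let r ≥ 1, let λ and μ be complex numbers with λ ≠ μ, and let γ be a nonzero complex number. Then the pair of (r+2)×(r+1) complex matrices (F_r ⊕ I₂, (K_r ⊕ diag(λ, μ)) + γ·E_{1,r+1}) is equivalent to the pair (F_{r+1} ⊕ [1], K_{r+1} ⊕ [λ]), where [1] and [λ] are 1×1 blocks. -/

import Mathlib

open Matrix

noncomputable section

/-- The `M × N` complex matrix obtained by placing the matrix `A` with its top-left corner
at (1-based) position `(ri+1, ci+1)` (i.e. with row offset `ri` and column offset `ci`),
with all other entries zero.  Block-diagonal direct sums of (possibly rectangular) matrices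
are expressed as sums of such placements along the diagonal. -/
def place {M N m n : ℕ} (ri ci : ℕ) (A : Matrix (Fin m) (Fin n) ℂ) :
    Matrix (Fin M) (Fin N) ℂ := fun i j =>
  if hi : ri ≤ (i : ℕ) ∧ (i : ℕ) < ri + m then
    if hj : ci ≤ (j : ℕ) ∧ (j : ℕ) < ci + n then
      A ⟨(i : ℕ) - ri, by omega⟩ ⟨(j : ℕ) - ci, by omega⟩
    else 0
  else 0

/-- The `r × (r-1)` matrix `F_r` with ones on the main diagonal and zeros elsewhere. -/
def MatF (r : ℕ) : Matrix (Fin r) (Fin (r - 1)) ℂ :=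
  fun i j => if (i : ℕ) = (j : ℕ) then 1 else 0

/-- The `r × (r-1)` matrix `K_r` with ones on the subdiagonal and zeros elsewhere. -/
def MatK (r : ℕ) : Matrix (Fin r) (Fin (r - 1)) ℂ :=
  fun i j => if (i : ℕ) = (j : ℕ) + 1 then 1 else 0

/-- The matrix unit `E_{a,b}` (1-based indices): entry `(a,b)` is `1`, all others `0`. -/
def Estd {M N : ℕ} (a b : ℕ) : Matrix (Fin M) (Fin N) ℂ :=
  fun i j => if (i : ℕ) + 1 = a ∧ (j : ℕ) + 1 = b then 1 else 0

/-- Two pairs `(A₁, A₂)` and `(B₁, B₂)` of `m × n` complex matrices are equivalent if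
`B₁ = R * A₁ * S` and `B₂ = R * A₂ * S` for some invertible `R`, `S`. -/
def PairEquiv {m n : ℕ} (A₁ A₂ B₁ B₂ : Matrix (Fin m) (Fin n) ℂ) : Prop :=
  ∃ (R : Matrix (Fin m) (Fin m) ℂ) (S : Matrix (Fin n) (Fin n) ℂ),
    IsUnit R ∧ IsUnit S ∧ B₁ = R * A₁ * S ∧ B₂ = R * A₂ * S

/- ### Auxiliary material for the proof -/

set_option maxHeartbeats 2000000

/-- The column transformation matrix `S`. -/
def Smat (r : ℕ) (mu γ : ℂ) : Matrix (Fin (r + 1)) (Fin (r + 1)) ℂ := fun i j =>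
  if (j : ℕ) = 0 then (if (i : ℕ) = r then 1 else 0)
  else if (j : ℕ) = r then (if (i : ℕ) + 1 = r then 1 else 0)
  else if (i : ℕ) < (j : ℕ) then γ * mu ^ ((j : ℕ) - 1 - (i : ℕ))
  else if (i : ℕ) = r then mu ^ (j : ℕ) else 0

/-- The (inverse of the) row transformation matrix. -/
def Qmat (r : ℕ) (mu γ : ℂ) : Matrix (Fin (r + 2)) (Fin (r + 2)) ℂ := fun i j =>
  if (j : ℕ) = 0 then (if (i : ℕ) = r + 1 then 1 else 0)
  else if (j : ℕ) = r + 1 then (if (i : ℕ) = r then 1 else 0)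
  else if (i : ℕ) < (j : ℕ) then γ * mu ^ ((j : ℕ) - 1 - (i : ℕ))
  else if (i : ℕ) = r + 1 then mu ^ (j : ℕ) else 0

/-- Explicit inverse of `Smat`. -/
def SmatInv (r : ℕ) (mu γ : ℂ) : Matrix (Fin (r + 1)) (Fin (r + 1)) ℂ := fun i j =>
  (if (i : ℕ) = (if (j : ℕ) + 1 < r then (j : ℕ) else if (j : ℕ) + 1 = r then r else 0) then
    (if (j : ℕ) + 1 < r then -(mu * γ⁻¹) else 1) else 0)
  + (if (i : ℕ) = (if (j : ℕ) + 1 < r then (j : ℕ) + 1 else r + 1) then γ⁻¹ else 0)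

/-- Explicit inverse of `Qmat`. -/
def QmatInv (r : ℕ) (mu γ : ℂ) : Matrix (Fin (r + 2)) (Fin (r + 2)) ℂ := fun i j =>
  (if (i : ℕ) = (if (j : ℕ) < r then (j : ℕ) else if (j : ℕ) = r then r + 1 else 0) then
    (if (j : ℕ) < r then -(mu * γ⁻¹) else 1) else 0)
  + (if (i : ℕ) = (if (j : ℕ) < r then (j : ℕ) + 1 else r + 2) then γ⁻¹ else 0)

lemma sum_mul_delta {n : ℕ} (c : ℕ) (w : ℂ) (f : Fin n → ℂ) :
    (∑ k : Fin n, f k * (if (k : ℕ) = c then w else 0)) =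
      if h : c < n then f ⟨c, h⟩ * w else 0 := by
  split_ifs with h
  · rw [Finset.sum_eq_single (⟨c, h⟩ : Fin n)]
    · simp
    · intro b _ hb
      have : (b : ℕ) ≠ c := fun hc => hb (Fin.ext hc)
      rw [if_neg this, mul_zero]
    · intro hmem; exact absurd (Finset.mem_univ _) hmem
  · apply Finset.sum_eq_zero
    intro k _
    have : (k : ℕ) ≠ c := by have := k.isLt; omega
    rw [if_neg this, mul_zero]

lemma delta_mul_sum {n : ℕ} (c : ℕ) (w : ℂ) (f : Fin n → ℂ) :
    (∑ k : Fin n, (if (k : ℕ) = c then w else 0) * f k) =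
      if h : c < n then w * f ⟨c, h⟩ else 0 := by
  split_ifs with h
  · rw [Finset.sum_eq_single (⟨c, h⟩ : Fin n)]
    · simp
    · intro b _ hb
      have : (b : ℕ) ≠ c := fun hc => hb (Fin.ext hc)
      rw [if_neg this, zero_mul]
    · intro hmem; exact absurd (Finset.mem_univ _) hmem
  · apply Finset.sum_eq_zero
    intro k _
    have : (k : ℕ) ≠ c := by have := k.isLt; omega
    rw [if_neg this, zero_mul]

lemma diag2_apply (lam mu : ℂ) (a b : Fin 2) :
    !![lam, 0; 0, mu] a b =
      if (a : ℕ) = (b : ℕ) then (if (a : ℕ) = 0 then lam else mu) else 0 := by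
  fin_cases a <;> fin_cases b <;> simp

lemma A1_apply (r : ℕ) (hr : 1 ≤ r) (i : Fin (r + 2)) (k : Fin (r + 1)) :
    (place 0 0 (MatF r) + place r (r - 1) (1 : Matrix (Fin 2) (Fin 2) ℂ) :
        Matrix (Fin (r + 2)) (Fin (r + 1)) ℂ) i k =
      if (k : ℕ) = (if (i : ℕ) + 1 < r then (i : ℕ) else if (i : ℕ) = r then r - 1
          else if (i : ℕ) = r + 1 then r else r + 2) then 1 else 0 := by
  have hi := i.isLt; have hk := k.isLt
  simp only [Matrix.add_apply, place, MatF, Matrix.one_apply, Fin.mk.injEq, Fin.ext_iff]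
  split_ifs <;>
    first
      | rfl | omega | assumption | (exact False.elim (by assumption))
      | (norm_num; done) | simp_all

lemma B1_apply (r : ℕ) (k : Fin (r + 2)) (j : Fin (r + 1)) :
    (place 0 0 (MatF (r + 1)) + place (r + 1) r !![(1 : ℂ)] :
        Matrix (Fin (r + 2)) (Fin (r + 1)) ℂ) k j =
      if (k : ℕ) = (if (j : ℕ) < r then (j : ℕ) else r + 1) then 1 else 0 := by
  have hk := k.isLt; have hj := j.isLt
  simp only [Matrix.add_apply, place, MatF, Matrix.of_apply, Matrix.cons_val', Matrix.cons_val_zero,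
    Matrix.cons_val_fin_one, Matrix.empty_val', Fin.ext_iff]
  split_ifs <;>
    first
      | rfl | omega | assumption | (exact False.elim (by assumption))
      | (norm_num; done) | simp_all

lemma A2_apply (r : ℕ) (hr : 1 ≤ r) (lam mu γ : ℂ) (i : Fin (r + 2)) (k : Fin (r + 1)) :
    (place 0 0 (MatK r) + place r (r - 1) !![lam, 0; 0, mu] + γ • Estd 1 (r + 1) :
        Matrix (Fin (r + 2)) (Fin (r + 1)) ℂ) i k =
      if (k : ℕ) = (if (i : ℕ) = 0 then r else if (i : ℕ) < r then (i : ℕ) - 1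
          else if (i : ℕ) = r then r - 1 else r) then
        (if (i : ℕ) = 0 then γ else if (i : ℕ) < r then 1
          else if (i : ℕ) = r then lam else mu) else 0 := by
  have hi := i.isLt; have hk := k.isLt
  simp only [Matrix.add_apply, Matrix.smul_apply, place, MatK, Estd, diag2_apply,
    smul_eq_mul, Fin.ext_iff]
  split_ifs <;>
    first
      | rfl | omega | assumption | (exact False.elim (by assumption))
      | (norm_num; done) | simp_all

lemma B2_apply (r : ℕ) (lam : ℂ) (k : Fin (r + 2)) (j : Fin (r + 1)) :
    (place 0 0 (MatK (r + 1)) + place (r + 1) r !![lam] :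
        Matrix (Fin (r + 2)) (Fin (r + 1)) ℂ) k j =
      if (k : ℕ) = (if (j : ℕ) < r then (j : ℕ) + 1 else r + 1) then
        (if (j : ℕ) < r then 1 else lam) else 0 := by
  have hk := k.isLt; have hj := j.isLt
  simp only [Matrix.add_apply, place, MatK, Matrix.of_apply, Matrix.cons_val', Matrix.cons_val_zero,
    Matrix.cons_val_fin_one, Matrix.empty_val', Fin.ext_iff]
  split_ifs <;>
    first
      | rfl | omega | assumption | (exact False.elim (by assumption))
      | (norm_num; done) | simp_all

lemma key1 (r : ℕ) (hr : 1 ≤ r) (mu γ : ℂ) :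
    (place 0 0 (MatF r) + place r (r - 1) (1 : Matrix (Fin 2) (Fin 2) ℂ) :
        Matrix (Fin (r + 2)) (Fin (r + 1)) ℂ) * Smat r mu γ =
      Qmat r mu γ * (place 0 0 (MatF (r + 1)) + place (r + 1) r !![(1 : ℂ)] :
          Matrix (Fin (r + 2)) (Fin (r + 1)) ℂ) := by
  ext i j
  have hi := i.isLt; have hj := j.isLt
  rw [Matrix.mul_apply, Matrix.mul_apply]
  simp only [A1_apply r hr, B1_apply r, delta_mul_sum, sum_mul_delta, Smat, Qmat, one_mul, mul_one]
  split_ifs <;>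
    first
      | rfl | omega | assumption | (exact False.elim (by assumption))
      | (congr 1 <;> omega) | (norm_num; done)

lemma key2 (r : ℕ) (hr : 1 ≤ r) (lam mu γ : ℂ) :
    (place 0 0 (MatK r) + place r (r - 1) !![lam, 0; 0, mu] + γ • Estd 1 (r + 1) :
        Matrix (Fin (r + 2)) (Fin (r + 1)) ℂ) * Smat r mu γ =
      Qmat r mu γ * (place 0 0 (MatK (r + 1)) + place (r + 1) r !![lam] :
          Matrix (Fin (r + 2)) (Fin (r + 1)) ℂ) := by
  ext i j
  have hi := i.isLt; have hj := j.isLt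
  rw [Matrix.mul_apply, Matrix.mul_apply]
  simp only [A2_apply r hr, B2_apply r, delta_mul_sum, sum_mul_delta, Smat, Qmat, one_mul, mul_one]
  split_ifs <;> (try simp only [one_mul, mul_one]) <;>
    first
      | rfl | omega | assumption | (exact False.elim (by assumption))
      | (congr 1 <;> first | rfl | omega | (congr 1 <;> omega)) | ring1 | (norm_num; done)
      | (rw [show (1 + (j : ℕ) - 1 - (i : ℕ)) = 0 from by omega]; ring1)
      | (rw [show ((j : ℕ) + 1 - 1 - (i : ℕ)) = 0 from by omega]; ring1)
      | (rw [show (0 - (i : ℕ)) = 0 from by omega]; ring1)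
      | (rw [show ((j : ℕ)) = 0 from by omega]; ring1)

lemma keyS (r : ℕ) (hr : 1 ≤ r) (mu γ : ℂ) (hγ : γ ≠ 0) :
    Smat r mu γ * SmatInv r mu γ = 1 := by
  ext i j
  have hi := i.isLt; have hj := j.isLt
  rw [Matrix.mul_apply, Matrix.one_apply]
  simp only [SmatInv, mul_add, Finset.sum_add_distrib, sum_mul_delta, Smat, Fin.ext_iff]
  split_ifs <;> (try simp only [one_mul, mul_one, mul_zero, zero_mul, add_zero, zero_add]) <;>
    first
      | rfl | omega | assumption | (exact False.elim (by assumption))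
      | ring1
      | (rw [show ((j : ℕ) - (i : ℕ)) = 0 from by omega]; ring1)
      | (rw [show ((j : ℕ)) = 0 from by omega]; ring1)
      | (rw [show ((j : ℕ) - (i : ℕ)) = ((j : ℕ) - 1 - (i : ℕ)) + 1 from by omega]; ring1)
      | (rw [show ((j : ℕ) + 1 - 1 - (i : ℕ)) = 0 from by omega]; field_simp)
      | (field_simp; done)
      | (field_simp; first
          | ring1
          | (rw [show ((j : ℕ) - (i : ℕ)) = ((j : ℕ) - 1 - (i : ℕ)) + 1 from by omega]; ring1)
          | (rw [show ((j : ℕ) + 1 - 1 - (i : ℕ)) = ((j : ℕ) - 1 - (i : ℕ)) + 1 from by omega]; ring1)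
          | (rw [show ((j : ℕ)) = 0 from by omega]; ring1))

lemma keyQ (r : ℕ) (hr : 1 ≤ r) (mu γ : ℂ) (hγ : γ ≠ 0) :
    Qmat r mu γ * QmatInv r mu γ = 1 := by
  ext i j
  have hi := i.isLt; have hj := j.isLt
  rw [Matrix.mul_apply, Matrix.one_apply]
  simp only [QmatInv, mul_add, Finset.sum_add_distrib, sum_mul_delta, Qmat, Fin.ext_iff]
  split_ifs <;> (try simp only [one_mul, mul_one, mul_zero, zero_mul, add_zero, zero_add]) <;>
    first
      | rfl | omega | assumption | (exact False.elim (by assumption))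
      | ring1
      | (rw [show ((j : ℕ) - (i : ℕ)) = 0 from by omega]; ring1)
      | (rw [show ((j : ℕ)) = 0 from by omega]; ring1)
      | (rw [show ((j : ℕ) - (i : ℕ)) = ((j : ℕ) - 1 - (i : ℕ)) + 1 from by omega]; ring1)
      | (rw [show ((j : ℕ) + 1 - 1 - (i : ℕ)) = 0 from by omega]; field_simp)
      | (field_simp; done)
      | (field_simp; first
          | ring1
          | (rw [show ((j : ℕ) - (i : ℕ)) = ((j : ℕ) - 1 - (i : ℕ)) + 1 from by omega]; ring1)
          | (rw [show ((j : ℕ) + 1 - 1 - (i : ℕ)) = ((j : ℕ) - 1 - (i : ℕ)) + 1 from by omega]; ring1)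
          | (rw [show ((j : ℕ)) = 0 from by omega]; ring1))

theorem bif_tri_r_lambda_mu_gamma (r : ℕ) (hr : 1 ≤ r) (lam mu : ℂ) (hlm : lam ≠ mu)
    (γ : ℂ) (hγ : γ ≠ 0) :
    PairEquiv
      (place 0 0 (MatF r) + place r (r - 1) (1 : Matrix (Fin 2) (Fin 2) ℂ) :
        Matrix (Fin (r + 2)) (Fin (r + 1)) ℂ)
      (place 0 0 (MatK r) + place r (r - 1) !![lam, 0; 0, mu] + γ • Estd 1 (r + 1))
      (place 0 0 (MatF (r + 1)) + place (r + 1) r !![(1 : ℂ)])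
      (place 0 0 (MatK (r + 1)) + place (r + 1) r !![lam]) := by
  have hQ := keyQ r hr mu γ hγ
  have hQ' : QmatInv r mu γ * Qmat r mu γ = 1 := mul_eq_one_comm.mp hQ
  have hS := keyS r hr mu γ hγ
  have hS' : SmatInv r mu γ * Smat r mu γ = 1 := mul_eq_one_comm.mp hS
  refine ⟨QmatInv r mu γ, Smat r mu γ, ⟨⟨QmatInv r mu γ, Qmat r mu γ, hQ', hQ⟩, rfl⟩,
    ⟨⟨Smat r mu γ, SmatInv r mu γ, hS, hS'⟩, rfl⟩, ?_, ?_⟩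
  · rw [Matrix.mul_assoc, key1 r hr mu γ, ← Matrix.mul_assoc, hQ', Matrix.one_mul]
  · rw [Matrix.mul_assoc, key2 r hr lam mu γ, ← Matrix.mul_assoc, hQ', Matrix.one_mul]
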